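/- Let M ⊆ ℝᵏ be closed with a locally finite partition into C¹ submanifolds (strata) such that limits of tangent spaces dominate: whenever a sequence yᵢ in a stratum S converges to a point x in a stratum S′ and T_{yᵢ}S converges to a subspace T, then T_xS′ ⊆ T. Fix a linear subspace P ⊆ ℝᵏ and an integer q ≥ 0, and suppose each stratum projects to P with constant rank. Then the union M(q,P) of all strata projecting to P with rank at most q is a closed set. -/

import Mathlib

open Filter

/-- `S ⊆ ℝᵏ` is an embedded `C¹` submanifold of dimension `d`. -/
def IsC1Submanifold (k d : ℕ) (S : Set (Fin k → ℝ)) : Prop :=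
  ∀ p ∈ S, ∃ (U : Set (Fin k → ℝ)) (V : Set (Fin d → ℝ))
      (φ : (Fin d → ℝ) → (Fin k → ℝ)),
    IsOpen U ∧ p ∈ U ∧ IsOpen V ∧ ContDiffOn ℝ 1 φ V ∧ φ '' V = S ∩ U ∧
    Set.InjOn φ V ∧
    ∀ v ∈ V, ∃ φ' : (Fin d → ℝ) →L[ℝ] (Fin k → ℝ),
      HasFDerivAt φ φ' v ∧ Function.Injective φ'

/-- The tangent space of `S` at `p`: velocities of `C¹` curves in `S` through `p`. -/
def tangentSpaceAt (k : ℕ) (S : Set (Fin k → ℝ)) (p : Fin k → ℝ) :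
    Set (Fin k → ℝ) :=
  {w | ∃ γ : ℝ → (Fin k → ℝ), (∀ t, γ t ∈ S) ∧ γ 0 = p ∧ HasDerivAt γ w 0}

/-- Convergence of a sequence of subsets (tangent spaces) to a limit set. -/
def SubsetLim {k : ℕ} (T : ℕ → Set (Fin k → ℝ)) (Tlim : Set (Fin k → ℝ)) : Prop :=
  (∀ w ∈ Tlim, ∃ ws : ℕ → (Fin k → ℝ), (∀ i, ws i ∈ T i) ∧
      Tendsto ws atTop (nhds w)) ∧
  ∀ (ws : ℕ → (Fin k → ℝ)) (w : Fin k → ℝ), (∀ i, ws i ∈ T i) →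
      Tendsto ws atTop (nhds w) → w ∈ Tlim

/-- The rank with which the tangent space of a stratum at `p` projects under the
linear projection `π`. -/
noncomputable def projRankAt {k : ℕ} (π : (Fin k → ℝ) →L[ℝ] (Fin k → ℝ))
    (S : Set (Fin k → ℝ)) (p : Fin k → ℝ) : ℕ :=
  Module.finrank ℝ (Submodule.span ℝ (π '' tangentSpaceAt k S p))

/-- If every `(q+1)`-tuple of elements of `A` is linearly dependent, then the span of
`A` has dimension at most `q`. -/
lemma aux_span_le {k q : ℕ} (A : Set (Fin k → ℝ))
    (h : ∀ f : Fin (q + 1) → (Fin k → ℝ), (∀ l, f l ∈ A) → ¬ LinearIndependent ℝ f) :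
    Module.finrank ℝ (Submodule.span ℝ A) ≤ q := by
  by_contra hq
  push_neg at hq
  obtain ⟨b, hbA, hbspan, hbind⟩ := exists_linearIndependent ℝ A
  have hbfin : b.Finite := hbind.setFinite
  haveI : Fintype b := hbfin.fintype
  have hcard : Module.finrank ℝ (Submodule.span ℝ b) = b.toFinset.card :=
    finrank_span_set_eq_card hbind
  have hge : q + 1 ≤ b.toFinset.card := by rw [← hcard, hbspan]; omega
  have : Fintype.card (Fin (q + 1)) ≤ Fintype.card b := by
    simpa [Set.toFinset_card] using hge
  obtain ⟨g⟩ := Function.Embedding.nonempty_of_card_le this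
  refine h (fun l => (g l : Fin k → ℝ)) (fun l => hbA (g l).2) ?_
  exact hbind.comp g g.injective

/-- let `M ⊆ ℝᵏ` be closed with a locally finite partition into `C¹`
strata satisfying the Whitney-type tangent condition (limits of tangent spaces
along a stratum dominate the tangent space of the limit stratum), and suppose
each stratum projects onto the subspace `P = range π` with constant rank
(`π` a linear projection, `π ∘ π = π`). Then for every `q ≥ 0`, the union
`M(q,P)` of the strata of projection rank at most `q` is closed. -/
theorem strata_low_rank_union_closed (k : ℕ) (M : Set (Fin k → ℝ))
    (hM : IsClosed M) (ι : Type) (S : ι → Set (Fin k → ℝ)) (d : ι → ℕ)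
    (hsub : ∀ i, IsC1Submanifold k (d i) (S i))
    (hdisj : Pairwise (Function.onFun Disjoint S))
    (hcover : ⋃ i, S i = M)
    (hlf : LocallyFinite S)
    (π : (Fin k → ℝ) →L[ℝ] (Fin k → ℝ)) (hproj : ∀ v, π (π v) = π v)
    (r : ι → ℕ) (hrank : ∀ i, ∀ p ∈ S i, projRankAt π (S i) p = r i)
    (htangent : ∀ (i j : ι) (ys : ℕ → (Fin k → ℝ)) (x : Fin k → ℝ),
      (∀ m, ys m ∈ S i) → x ∈ S j → Tendsto ys atTop (nhds x) →
      ∀ T : Set (Fin k → ℝ), SubsetLim (fun m => tangentSpaceAt k (S i) (ys m)) T →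
        tangentSpaceAt k (S j) x ⊆ T)
    (q : ℕ) :
    IsClosed (⋃ i ∈ {i : ι | r i ≤ q}, S i) := by
  have hrw : (⋃ i ∈ {i : ι | r i ≤ q}, S i) = ⋃ i : {i : ι | r i ≤ q}, S i := by
    ext x; simp
  rw [hrw]
  apply isClosed_of_closure_subset
  have hcl : closure (⋃ i : {i : ι | r i ≤ q}, S i.val)
      = ⋃ i : {i : ι | r i ≤ q}, closure (S i.val) :=
    LocallyFinite.closure_iUnion (hlf.comp_injective Subtype.val_injective)
  rw [hcl]
  rintro x hx
  rw [Set.mem_iUnion] at hx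
  obtain ⟨⟨i, hi⟩, hxi⟩ := hx
  obtain ⟨ys, hys, hlim⟩ := mem_closure_iff_seq_limit.1 hxi
  have hSiM : S i ⊆ M := hcover ▸ Set.subset_iUnion S i
  have hxM : x ∈ M := hM.closure_subset ((closure_mono hSiM) hxi)
  rw [← hcover, Set.mem_iUnion] at hxM
  obtain ⟨j, hxj⟩ := hxM
  suffices hrj : r j ≤ q by
    exact Set.mem_iUnion.2 ⟨⟨j, hrj⟩, hxj⟩
  -- the canonical limit set of the tangent spaces along `ys`
  set T : Set (Fin k → ℝ) :=
    {w | ∃ ws : ℕ → (Fin k → ℝ), (∀ m, ws m ∈ tangentSpaceAt k (S i) (ys m)) ∧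
      Tendsto ws atTop (nhds w)} with hTdef
  have hT : SubsetLim (fun m => tangentSpaceAt k (S i) (ys m)) T :=
    ⟨fun w hw => hw, fun ws w h1 h2 => ⟨ws, h1, h2⟩⟩
  have hsubT : tangentSpaceAt k (S j) x ⊆ T := htangent i j ys x hys hxj hlim T hT
  have key : projRankAt π (S j) x ≤ q := by
    apply aux_span_le
    intro f hf hind
    simp only [Set.mem_image] at hf
    choose u hu hfu using hf
    have huT : ∀ l, u l ∈ T := fun l => hsubT (hu l)
    choose ws hws hwtend using huT
    set g : ℕ → Fin (q + 1) → (Fin k → ℝ) := fun m l => π (ws l m) with hgdef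
    have hdep : ∀ m, ¬ LinearIndependent ℝ (g m) := by
      intro m hindm
      set W := Submodule.span ℝ (π '' tangentSpaceAt k (S i) (ys m)) with hWdef
      have hWrank : Module.finrank ℝ W = r i := hrank i (ys m) (hys m)
      have hmem : ∀ l, g m l ∈ W :=
        fun l => Submodule.subset_span ⟨ws l m, hws l m, rfl⟩
      set g' : Fin (q + 1) → W := fun l => ⟨g m l, hmem l⟩ with hg'def
      have hind' : LinearIndependent ℝ g' := by
        apply LinearIndependent.of_comp W.subtype
        convert hindm
        rfl
      have := hind'.fintype_card_le_finrank
      rw [hWrank, Fintype.card_fin] at this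
      have hi' : r i ≤ q := hi
      omega
    have hconv : Tendsto g atTop (nhds f) := by
      rw [tendsto_pi_nhds]
      intro l
      have : Tendsto (fun m => π (ws l m)) atTop (nhds (π (u l))) :=
        (π.continuous.tendsto _).comp (hwtend l)
      rwa [hfu l] at this
    have hev : ∀ᶠ m in atTop, LinearIndependent ℝ (g m) :=
      hconv.eventually (isOpen_setOf_linearIndependent.mem_nhds hind)
    obtain ⟨m, hm⟩ := hev.exists
    exact hdep m hm
  rw [hrank j x hxj] at key
  exact key
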